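/- Suppose T is in case 1 (k < 0 and M < m), let I_h(t) = a·e^{kt} + (b_m + b_M)/2 and R = T − I_h(𝔱). Let m' be the smallest index with R_{m'} = min_i R_i and M' the largest index with R_{M'} = max_i R_i. Then m' ≤ m, M' ≥ M, and moreover either m' < m or M' > M; in particular m' − M' < m − M. -/
import Mathlib


/-- In case 1 (`k < 0` and `M < m`), for the remainder
`R = T − I_h(𝔱)` with `I_h(t) = a·e^{kt} + (b_m + b_M)/2`, letting `m'` be the
smallest index where `R` attains its minimum and `M'` the largest index where
`R` attains its maximum, one has `m' ≤ m`, `M' ≥ M`, moreover `m' < m` or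
`M' > M`; in particular `m' − M' < m − M` (as integers). -/
theorem case1_remainder_indices_shrink {n : ℕ}
    (t : Fin n → ℝ) (ht : StrictMono t) (T : Fin n → ℝ)
    (k : ℝ) (hk : k < 0)
    (m M : Fin n)
    (hm_min : ∀ i, T m ≤ T i) (hm_first : ∀ i, T i = T m → m ≤ i)
    (hM_max : ∀ i, T i ≤ T M) (hM_last : ∀ i, T i = T M → i ≤ M)
    (hMm : M < m)
    (a : ℝ)
    (ha_mem :
      (∃ i, i < m ∧ a = (T i - T m) / (Real.exp (k * t i) - Real.exp (k * t m))) ∨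
      (∃ j, M < j ∧ a = (T j - T M) / (Real.exp (k * t j) - Real.exp (k * t M))))
    (ha_min :
      (∀ i, i < m → a ≤ (T i - T m) / (Real.exp (k * t i) - Real.exp (k * t m))) ∧
      (∀ j, M < j → a ≤ (T j - T M) / (Real.exp (k * t j) - Real.exp (k * t M))))
    (bm bM : ℝ)
    (hbm : bm = T m - a * Real.exp (k * t m))
    (hbM : bM = T M - a * Real.exp (k * t M))
    (R : Fin n → ℝ)
    (hR : R = fun i => T i - (a * Real.exp (k * t i) + (bm + bM) / 2))
    (m' M' : Fin n)
    (hm'_min : ∀ i, R m' ≤ R i) (hm'_first : ∀ i, R i = R m' → m' ≤ i)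
    (hM'_max : ∀ i, R i ≤ R M') (hM'_last : ∀ i, R i = R M' → i ≤ M') :
    m' ≤ m ∧ M ≤ M' ∧ (m' < m ∨ M < M') ∧
      ((m' : ℕ) : ℤ) - ((M' : ℕ) : ℤ) < ((m : ℕ) : ℤ) - ((M : ℕ) : ℤ) := by
  have hexp : ∀ i j : Fin n, i < j → Real.exp (k * t j) < Real.exp (k * t i) := by
    intro i j h
    exact Real.exp_lt_exp.mpr (mul_lt_mul_of_neg_left (ht h) hk)
  have ha_pos : 0 < a := by
    rcases ha_mem with ⟨i, hi, hai⟩ | ⟨j, hj, haj⟩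
    · have hd : 0 < Real.exp (k * t i) - Real.exp (k * t m) := sub_pos.mpr (hexp i m hi)
      have hT : T m < T i :=
        lt_of_le_of_ne (hm_min i) (fun h => absurd (hm_first i h.symm) (not_le.mpr hi))
      rw [hai]
      exact div_pos (sub_pos.mpr hT) hd
    · have hd : Real.exp (k * t j) - Real.exp (k * t M) < 0 := sub_neg.mpr (hexp M j hj)
      have hT : T j < T M :=
        lt_of_le_of_ne (hM_max j) (fun h => absurd (hM_last j h) (not_le.mpr hj))
      rw [haj]
      exact div_pos_of_neg_of_neg (sub_neg.mpr hT) hd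
  have hmin : ∀ i, R m ≤ R i := by
    intro i
    rcases lt_or_ge i m with h | h
    · have hd : 0 < Real.exp (k * t i) - Real.exp (k * t m) := sub_pos.mpr (hexp i m h)
      have h2 := (le_div_iff₀ hd).mp (ha_min.1 i h)
      simp only [hR]
      nlinarith
    · have he : Real.exp (k * t i) ≤ Real.exp (k * t m) := by
        rcases eq_or_lt_of_le h with rfl | h
        · exact le_refl _
        · exact (hexp m i h).le
      have h2 := hm_min i
      simp only [hR]
      nlinarith [mul_le_mul_of_nonneg_left he ha_pos.le]
  have hmax : ∀ i, R i ≤ R M := by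
    intro i
    rcases lt_or_ge M i with h | h
    · have hd : Real.exp (k * t i) - Real.exp (k * t M) < 0 := sub_neg.mpr (hexp M i h)
      have h2 := (le_div_iff_of_neg hd).mp (ha_min.2 i h)
      simp only [hR]
      nlinarith
    · have he : Real.exp (k * t M) ≤ Real.exp (k * t i) := by
        rcases eq_or_lt_of_le h with rfl | h
        · exact le_refl _
        · exact (hexp i M h).le
      have h2 := hM_max i
      simp only [hR]
      nlinarith [mul_le_mul_of_nonneg_left he ha_pos.le]
  have hRm' : R m' = R m := le_antisymm (hm'_min m) (hmin m')
  have h1 : m' ≤ m := hm'_first m hRm'.symm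
  have hRM' : R M' = R M := le_antisymm (hmax M') (hM'_max M)
  have h2 : M ≤ M' := hM'_last M hRM'.symm
  have h3 : m' < m ∨ M < M' := by
    rcases ha_mem with ⟨i, hi, hai⟩ | ⟨j, hj, haj⟩
    · left
      have hd : Real.exp (k * t i) - Real.exp (k * t m) ≠ 0 :=
        ne_of_gt (sub_pos.mpr (hexp i m hi))
      have heq : a * (Real.exp (k * t i) - Real.exp (k * t m)) = T i - T m := by
        rw [hai, div_mul_cancel₀ _ hd]
      have hRi : R i = R m' := by
        rw [hRm']; simp only [hR]; nlinarith
      exact lt_of_le_of_lt (hm'_first i hRi) hi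
    · right
      have hd : Real.exp (k * t j) - Real.exp (k * t M) ≠ 0 :=
        ne_of_lt (sub_neg.mpr (hexp M j hj))
      have heq : a * (Real.exp (k * t j) - Real.exp (k * t M)) = T j - T M := by
        rw [haj, div_mul_cancel₀ _ hd]
      have hRj : R j = R M' := by
        rw [hRM']; simp only [hR]; nlinarith
      exact lt_of_lt_of_le hj (hM'_last j hRj)
  refine ⟨h1, h2, h3, ?_⟩
  rw [Fin.le_def] at h1 h2
  rcases h3 with h | h <;> rw [Fin.lt_def] at h <;> omega
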